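/- Assume Assumption 1 holds. If C = Σ_{l=1}^{q} a_l Ψ_l with a_q ≠ 0 for some finite q ≥ 1 (i.e., ⟨C,Ψ_q⟩_𝒮 ≠ 0 and ⟨C,Ψ_l⟩_𝒮 = 0 for all l > q), then with probability 1 there exists N such that ι(Ĉ_n, δ_n) = q for all n ≥ N. -/
import Mathlib


open MeasureTheory Filter
open scoped RealInnerProductSpace

variable {𝒮 : Type*} [NormedAddCommGroup 𝒮] [InnerProductSpace ℝ 𝒮]

/-- `P_j(S) = ∑_{l=1}^{j} ⟨S, Ψ_l⟩ Ψ_l`, the orthogonal projection of `S` onto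
`W_j = span {Ψ_1, …, Ψ_j}` (indices `0, …, j-1` in `0`-indexed notation). -/
noncomputable def basisProj (Ψ : HilbertBasis ℕ ℝ 𝒮) (j : ℕ) (S : 𝒮) : 𝒮 :=
  ∑ l ∈ Finset.range j, ⟪S, Ψ l⟫ • Ψ l

/-- `W_j = span {Ψ_1, …, Ψ_j}` (i.e. the span of `Ψ 0, …, Ψ (j-1)`). -/
def basisSpan (Ψ : HilbertBasis ℕ ℝ 𝒮) (j : ℕ) : Submodule ℝ 𝒮 :=
  Submodule.span ℝ ((fun l => Ψ l) '' Set.Iio j)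

/-- `ι(S, δ) = min {j ≥ 1 : ‖S - P_j(S)‖_𝒮 < δ}`. -/
noncomputable def iotaDim (Ψ : HilbertBasis ℕ ℝ 𝒮) (S : 𝒮) (δ : ℝ) : ℕ :=
  sInf {j | 1 ≤ j ∧ ‖S - basisProj Ψ j S‖ < δ}

lemma inner_basisProj (Ψ : HilbertBasis ℕ ℝ 𝒮) (j : ℕ) (S : 𝒮) (l : ℕ) :
    ⟪basisProj Ψ j S, Ψ l⟫ = if l < j then ⟪S, Ψ l⟫ else 0 := by
  unfold basisProj
  rw [sum_inner]
  have horth := Ψ.orthonormal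
  rw [orthonormal_iff_ite] at horth
  by_cases h : l < j
  · rw [if_pos h, Finset.sum_eq_single l]
    · rw [real_inner_smul_left, horth l l, if_pos rfl, mul_one]
    · intro m _ hm
      rw [real_inner_smul_left, horth m l, if_neg hm, mul_zero]
    · intro hl; exact absurd (Finset.mem_range.mpr h) hl
  · rw [if_neg h]
    apply Finset.sum_eq_zero
    intro m hm
    have : m ≠ l := by
      intro e; exact h (e ▸ Finset.mem_range.mp hm)
    rw [real_inner_smul_left, horth m l, if_neg this, mul_zero]

lemma basisProj_sub (Ψ : HilbertBasis ℕ ℝ 𝒮) (j : ℕ) (A B : 𝒮) :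
    basisProj Ψ j (A - B) = basisProj Ψ j A - basisProj Ψ j B := by
  simp [basisProj, inner_sub_left, sub_smul, Finset.sum_sub_distrib]

lemma basisProj_self (Ψ : HilbertBasis ℕ ℝ 𝒮) (q : ℕ) (C : 𝒮)
    (hzero : ∀ l, q ≤ l → ⟪C, Ψ l⟫ = 0) : basisProj Ψ q C = C := by
  have h1 : HasSum (fun l => ⟪C, Ψ l⟫ • Ψ l) C := by
    have := Ψ.hasSum_repr C
    convert this using 2 with l
    rw [Ψ.repr_apply_apply, real_inner_comm]
  have h2 : HasSum (fun l => ⟪C, Ψ l⟫ • Ψ l) (basisProj Ψ q C) := by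
    apply hasSum_sum_of_ne_finset_zero
    intro l hl
    rw [hzero l (by simpa using hl), zero_smul]
  exact h2.unique h1

lemma norm_sub_basisProj_le (Ψ : HilbertBasis ℕ ℝ 𝒮) (j : ℕ) (S : 𝒮) :
    ‖S - basisProj Ψ j S‖ ≤ ‖S‖ := by
  set P := basisProj Ψ j S with hP
  have hterm : ∀ l < j, ⟪S - P, Ψ l⟫ = 0 := by
    intro l hl
    rw [inner_sub_left, hP, inner_basisProj, if_pos hl, sub_self]
  have horth : ⟪S - P, P⟫ = 0 := by
    rw [hP]
    show ⟪S - P, ∑ l ∈ Finset.range j, ⟪S, Ψ l⟫ • Ψ l⟫ = 0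
    rw [inner_sum]
    apply Finset.sum_eq_zero
    intro l hl
    rw [real_inner_smul_right, hterm l (Finset.mem_range.mp hl), mul_zero]
  have key : ‖S‖ ^ 2 = ‖S - P‖ ^ 2 + ‖P‖ ^ 2 := by
    have h := norm_add_sq_real (S - P) P
    rw [sub_add_cancel, horth] at h
    linarith
  nlinarith [norm_nonneg (S - P), norm_nonneg S, sq_nonneg ‖P‖]

lemma abs_inner_le_norm_sub_basisProj (Ψ : HilbertBasis ℕ ℝ 𝒮) (j l : ℕ) (hl : j ≤ l)
    (S : 𝒮) : |⟪S, Ψ l⟫| ≤ ‖S - basisProj Ψ j S‖ := by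
  have h1 : ⟪S - basisProj Ψ j S, Ψ l⟫ = ⟪S, Ψ l⟫ := by
    rw [inner_sub_left, inner_basisProj, if_neg (by omega), sub_zero]
  calc |⟪S, Ψ l⟫| = |⟪S - basisProj Ψ j S, Ψ l⟫| := by rw [h1]
    _ ≤ ‖S - basisProj Ψ j S‖ * ‖Ψ l‖ := abs_real_inner_le_norm _ _
    _ = ‖S - basisProj Ψ j S‖ := by rw [Ψ.orthonormal.1 l, mul_one]

lemma iotaDim_eq (Ψ : HilbertBasis ℕ ℝ 𝒮) (S : 𝒮) (δ : ℝ) (q : ℕ) (hq : 1 ≤ q)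
    (hmem : ‖S - basisProj Ψ q S‖ < δ)
    (hlow : ∀ j < q, δ ≤ ‖S - basisProj Ψ j S‖) : iotaDim Ψ S δ = q := by
  have hqmem : q ∈ {j | 1 ≤ j ∧ ‖S - basisProj Ψ j S‖ < δ} := ⟨hq, hmem⟩
  have h2 := Nat.sInf_mem (⟨q, hqmem⟩ : {j | 1 ≤ j ∧ ‖S - basisProj Ψ j S‖ < δ}.Nonempty)
  refine le_antisymm (Nat.sInf_le hqmem) ?_
  by_contra h
  push_neg at h
  exact absurd h2.2 (not_lt.mpr (hlow _ h))

/-- Under Assumption 1, if `C = ∑_{l=1}^{q} a_l Ψ_l` with `a_q ≠ 0` for some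
finite `q ≥ 1` (i.e. `⟨C, Ψ_q⟩ ≠ 0` and `⟨C, Ψ_l⟩ = 0` for all `l > q`), then almost surely
`ι(Ĉ_n, δ_n) = q` for all sufficiently large `n`. -/
theorem finite_expansion_detection_given_basis
    {𝒮 : Type*} [NormedAddCommGroup 𝒮] [InnerProductSpace ℝ 𝒮]
    {Ω : Type*} [MeasurableSpace Ω] (ℙ : Measure Ω) [IsProbabilityMeasure ℙ]
    [MeasurableSpace 𝒮] [BorelSpace 𝒮]
    (Ψ : HilbertBasis ℕ ℝ 𝒮)
    (Chat : ℕ → Ω → 𝒮) (hChat : ∀ n, Measurable (Chat n))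
    (C : 𝒮)
    (R : ℕ → ℝ) (hRpos : ∀ n, 0 < R n) (hRanti : StrictAnti R)
    (hRlim : Tendsto R atTop (nhds 0))
    (hrate : ∀ᵐ ω ∂ℙ, ∀ᶠ n in atTop, ‖Chat n ω - C‖ < R n)
    (ε : ℝ) (hε : 0 < ε) (δ : ℕ → ℝ) (hδ : ∀ n, δ n = (1 + ε) * R n)
    (q : ℕ) (hq : 1 ≤ q) (hcq : ⟪C, Ψ (q - 1)⟫ ≠ 0)
    (hzero : ∀ l, q ≤ l → ⟪C, Ψ l⟫ = 0) :
    ∀ᵐ ω ∂ℙ, ∀ᶠ n in atTop, iotaDim Ψ (Chat n ω) (δ n) = q := by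
  set a := |⟪C, Ψ (q - 1)⟫| with ha
  have hapos : 0 < a := abs_pos.mpr hcq
  have hR2 : ∀ᶠ n in atTop, R n < a / (2 + ε) :=
    hRlim.eventually (gt_mem_nhds (by positivity))
  filter_upwards [hrate] with ω hω
  filter_upwards [hω, hR2] with n h1 h2
  have h3 : (2 + ε) * R n < a := (lt_div_iff₀' (by linarith)).mp h2
  apply iotaDim_eq Ψ _ _ q hq
  · have hC : basisProj Ψ q C = C := basisProj_self Ψ q C hzero
    have heq : Chat n ω - basisProj Ψ q (Chat n ω)
        = (Chat n ω - C) - basisProj Ψ q (Chat n ω - C) := by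
      rw [basisProj_sub, hC]; abel
    rw [heq, hδ n]
    have := norm_sub_basisProj_le Ψ q (Chat n ω - C)
    nlinarith [hRpos n]
  · intro j hj
    have hjq : j ≤ q - 1 := by omega
    have hb := abs_inner_le_norm_sub_basisProj Ψ j (q - 1) hjq (Chat n ω)
    have hdiff : |⟪Chat n ω - C, Ψ (q - 1)⟫| ≤ ‖Chat n ω - C‖ := by
      calc |⟪Chat n ω - C, Ψ (q - 1)⟫| ≤ ‖Chat n ω - C‖ * ‖Ψ (q - 1)‖ :=
            abs_real_inner_le_norm _ _
        _ = ‖Chat n ω - C‖ := by rw [Ψ.orthonormal.1, mul_one]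
    have hsplit : ⟪Chat n ω, Ψ (q - 1)⟫
        = ⟪C, Ψ (q - 1)⟫ + ⟪Chat n ω - C, Ψ (q - 1)⟫ := by
      rw [inner_sub_left]; ring
    have hlow : a - ‖Chat n ω - C‖ ≤ |⟪Chat n ω, Ψ (q - 1)⟫| := by
      have h4 := abs_sub_abs_le_abs_sub (⟪C, Ψ (q - 1)⟫)
        (⟪C, Ψ (q - 1)⟫ + ⟪Chat n ω - C, Ψ (q - 1)⟫)
      simp only [sub_add_cancel_left, abs_neg, add_sub_cancel_left] at h4
      rw [hsplit]
      linarith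
    rw [hδ n]
    linarith
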